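/- Let F be a field of characteristic 2, let V and W be finite-dimensional F-vector spaces of dimensions m and n respectively, and let a ∈ GL(V) and b ∈ GL(W) satisfy a² = 1 and b² = 1. Set r = rank(a − 1_V) and s = rank(b − 1_W). Then the fixed-point subspace of the tensor product map a ⊗ b on V ⊗ W has dimension m·n − r·n − s·m + 2·r·s. -/

import Mathlib

open TensorProduct

private lemma stmt5_add_self {F M : Type*} [Field F] [AddCommGroup M] [Module F M]
    (h2 : (2 : F) = 0) (x : M) : x + x = 0 := by
  rw [← two_smul F x, h2, zero_smul]

private lemma stmt5_neg_self {F M : Type*} [Field F] [AddCommGroup M] [Module F M]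
    (h2 : (2 : F) = 0) (x : M) : -x = x :=
  neg_eq_of_add_eq_zero_left (stmt5_add_self h2 x)

open LinearMap Module in
private lemma stmt5_range_lTensor {F : Type*} [Field F] (M : Type*) {W : Type*}
    [AddCommGroup M] [Module F M] [FiniteDimensional F M]
    [AddCommGroup W] [Module F W] [FiniteDimensional F W] (f : W →ₗ[F] W) :
    finrank F (range (lTensor M f)) = finrank F M * finrank F (range f) := by
  have h0 : (range f).subtype ∘ₗ f.rangeRestrict = f := by ext x; rfl
  rw [show lTensor M f = lTensor M ((range f).subtype ∘ₗ f.rangeRestrict) by rw [h0],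
    lTensor_comp,
    range_comp_of_range_eq_top _ (range_eq_top.mpr
      (lTensor_surjective M f.surjective_rangeRestrict)),
    finrank_range_of_inj (Module.Flat.lTensor_preserves_injective_linearMap _
      (range f).injective_subtype),
    finrank_tensorProduct]

set_option maxHeartbeats 1600000 in
/-- Let `F` be a field of characteristic 2, `V`, `W` finite-dimensional `F`-spaces of
dimensions `m`, `n`, and let `a ∈ GL(V)`, `b ∈ GL(W)` be involutions (`a² = 1`, `b² = 1`)
with `r = rank(a − 1)`, `s = rank(b − 1)`. Then the fixed-point space of `a ⊗ b` on `V ⊗ W`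
has dimension `m·n − r·n − s·m + 2·r·s`. -/
theorem stmt5 {F V W : Type*} [Field F] (hF : ringChar F = 2)
    [AddCommGroup V] [Module F V] [FiniteDimensional F V]
    [AddCommGroup W] [Module F W] [FiniteDimensional F W]
    {m n : ℕ} (hm : Module.finrank F V = m) (hn : Module.finrank F W = n)
    (a : V ≃ₗ[F] V) (b : W ≃ₗ[F] W) (ha : a ^ 2 = 1) (hb : b ^ 2 = 1)
    {r s : ℕ}
    (hr : Module.finrank F (LinearMap.range (a.toLinearMap - LinearMap.id)) = r)
    (hs : Module.finrank F (LinearMap.range (b.toLinearMap - LinearMap.id)) = s) :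
    (Module.finrank F (LinearMap.ker
        (TensorProduct.map a.toLinearMap b.toLinearMap - LinearMap.id)) : ℤ) =
      m * n - r * n - s * m + 2 * r * s := by
  classical
  open LinearMap Module Submodule in
  have h2 : (2 : F) = 0 := by
    haveI : CharP F 2 := hF ▸ ringChar.charP F
    exact CharP.cast_eq_zero F 2
  open LinearMap Module Submodule in
  set a' := a.toLinearMap with ha'
  set b' := b.toLinearMap with hb'
  set A := a' - LinearMap.id with hA
  set B := b' - LinearMap.id with hB
  -- basic pointwise facts
  have haa : ∀ v, a' (a' v) = v := by
    intro v
    have h := DFunLike.congr_fun ha v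
    simpa [pow_two, ha'] using h
  have hbb : ∀ w, b' (b' w) = w := by
    intro w
    have h := DFunLike.congr_fun hb w
    simpa [pow_two, hb'] using h
  have hAA : ∀ v, A (A v) = 0 := by
    intro v
    have h : A (A v) = (v - a' v) + (v - a' v) := by
      simp only [hA, LinearMap.sub_apply, LinearMap.id_apply, map_sub, haa]
      abel
    rw [h, stmt5_add_self h2]
  have hBB : B ∘ₗ B = 0 := by
    ext w
    have h : B (B w) = (w - b' w) + (w - b' w) := by
      simp only [hB, LinearMap.sub_apply, LinearMap.id_apply, map_sub, hbb]
      abel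
    simpa [h] using stmt5_add_self h2 (w - b' w)
  have hbB : b' ∘ₗ B = B := by
    have hbbc : b' ∘ₗ b' = LinearMap.id := by ext w; exact hbb w
    calc b' ∘ₗ B = b' ∘ₗ b' - b' := by rw [hB, comp_sub, comp_id]
      _ = LinearMap.id - b' := by rw [hbbc]
      _ = -(b' - LinearMap.id) := by rw [neg_sub]
      _ = B := by rw [← hB, stmt5_neg_self h2]
  -- the auxiliary operator S
  set S : V ⊗[F] W →ₗ[F] V ⊗[F] W := rTensor W A + lTensor V B with hS
  have hTS : TensorProduct.map a' b' - LinearMap.id = lTensor V b' ∘ₗ S := by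
    have e1 : lTensor V b' ∘ₗ rTensor W A
        = TensorProduct.map a' b' - lTensor V b' := by
      rw [hA, rTensor_sub, rTensor_id, comp_sub, comp_id, lTensor_comp_rTensor]
    have e2 : lTensor V b' ∘ₗ lTensor V B = lTensor V b' - LinearMap.id := by
      rw [← lTensor_comp, hbB, hB, lTensor_sub, lTensor_id]
    rw [hS, comp_add, e1, e2]
    abel
  have hbinj : Function.Injective (lTensor V b') :=
    Module.Flat.lTensor_preserves_injective_linearMap b' b.injective
  have hkerT : LinearMap.ker (TensorProduct.map a' b' - LinearMap.id) = LinearMap.ker S := by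
    rw [hTS]
    exact ker_comp_of_ker_eq_bot S (ker_eq_bot.mpr hbinj)
  -- decomposition of V
  set K := LinearMap.ker A with hK
  obtain ⟨C, hKC⟩ := Submodule.exists_isCompl K
  set ιK := K.subtype with hιK
  set ιC := C.subtype with hιC
  set pK := K.linearProjOfIsCompl C hKC with hpK
  set pC := C.linearProjOfIsCompl K hKC.symm with hpC
  have hproj : ιK ∘ₗ pK + ιC ∘ₗ pC = LinearMap.id := by
    ext v
    exact Submodule.projection_add_projection_eq_self hKC v
  have hpKiK : pK ∘ₗ ιK = LinearMap.id := Submodule.linearProjOfIsCompl_comp_subtype hKC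
  have hpCiC : pC ∘ₗ ιC = LinearMap.id := Submodule.linearProjOfIsCompl_comp_subtype hKC.symm
  have hpCiK : pC ∘ₗ ιK = 0 := by
    ext k
    exact congrArg _ (Submodule.linearProjOfIsCompl_apply_right hKC.symm k)
  have hpKiC : pK ∘ₗ ιC = 0 := by
    ext c
    exact congrArg _ (Submodule.linearProjOfIsCompl_apply_right hKC c)
  have hAiK : A ∘ₗ ιK = 0 := by
    ext k
    exact k.2
  -- the map A₁ : C → K induced by A
  set A₁ : (↥C) →ₗ[F] (↥K) := LinearMap.codRestrict K (A ∘ₗ ιC)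
    (fun c => LinearMap.mem_ker.mpr (hAA (ιC c))) with hA₁def
  have hA₁ : ιK ∘ₗ A₁ = A ∘ₗ ιC := LinearMap.subtype_comp_codRestrict _ _ _
  have hA₁inj : LinearMap.ker A₁ = ⊥ := by
    rw [eq_bot_iff]
    intro c hc
    have hc0 : A₁ c = 0 := hc
    have h1 : (c : V) ∈ K := by
      have h' : A ((c : V)) = ιK (A₁ c) := (DFunLike.congr_fun hA₁ c).symm
      rw [hc0, map_zero] at h'
      exact LinearMap.mem_ker.mpr h'
    have h2' : (c : V) = 0 := (Submodule.disjoint_def.mp hKC.disjoint) _ h1 c.2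
    simpa using Subtype.ext h2'
  obtain ⟨L, hL⟩ := A₁.exists_leftInverse_of_injective hA₁inj
  -- A factored through the projection
  have hAv : ∀ v, A v = ιK (A₁ (pC v)) := by
    intro v
    have hv : ιK (pK v) + ιC (pC v) = v := by
      simpa using DFunLike.congr_fun hproj v
    have hAK : A (ιK (pK v)) = 0 := DFunLike.congr_fun hAiK (pK v)
    have hAC : A (ιC (pC v)) = ιK (A₁ (pC v)) := (DFunLike.congr_fun hA₁ (pC v)).symm
    calc A v = A (ιK (pK v) + ιC (pC v)) := by rw [hv]
      _ = A (ιK (pK v)) + A (ιC (pC v)) := map_add _ _ _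
      _ = ιK (A₁ (pC v)) := by rw [hAK, hAC, zero_add]
  have hpKA : pK ∘ₗ A = A₁ ∘ₗ pC := by
    ext v
    simp only [LinearMap.comp_apply, hAv]
    have h := DFunLike.congr_fun hpKiK (A₁ (pC v))
    simp only [LinearMap.comp_apply, LinearMap.id_apply] at h
    exact congrArg Subtype.val h
  have hAiKA : A ∘ₗ (ιK ∘ₗ A₁) = 0 := by
    rw [← LinearMap.comp_assoc, hAiK, LinearMap.zero_comp]
  have hpCiKA : pC ∘ₗ (ιK ∘ₗ A₁) = 0 := by
    rw [← LinearMap.comp_assoc, hpCiK, LinearMap.zero_comp]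
  -- Φ : ker S → C ⊗ W
  set Φ : (LinearMap.ker S) →ₗ[F] ((↥C) ⊗[F] W) :=
    (rTensor W pC) ∘ₗ (LinearMap.ker S).subtype with hΦdef
  -- range of Φ
  have hrangeΦ : LinearMap.range Φ = LinearMap.range (lTensor (↥C) B) := by
    apply le_antisymm
    · rintro _ ⟨⟨x, hx⟩, rfl⟩
      have hSx : rTensor W A x + lTensor V B x = 0 := LinearMap.mem_ker.mp hx
      have h1 : rTensor W A₁ (rTensor W pC x) + lTensor (↥K) B (rTensor W pK x) = 0 := by
        have h := congrArg (rTensor W pK) hSx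
        rw [map_add, map_zero] at h
        have e1 : rTensor W pK (rTensor W A x) = rTensor W A₁ (rTensor W pC x) := by
          rw [← rTensor_comp_apply, hpKA, rTensor_comp_apply]
        have e2 : rTensor W pK (lTensor V B x) = lTensor (↥K) B (rTensor W pK x) := by
          rw [← LinearMap.comp_apply, rTensor_comp_lTensor, ← lTensor_comp_rTensor,
            LinearMap.comp_apply]
        rw [e1, e2] at h
        exact h
      have h2' : rTensor W A₁ (rTensor W pC x) = lTensor (↥K) B (rTensor W pK x) := by
        have h := eq_neg_of_add_eq_zero_left h1
        rwa [stmt5_neg_self h2] at h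
      refine ⟨rTensor W L (rTensor W pK x), ?_⟩
      calc lTensor (↥C) B (rTensor W L (rTensor W pK x))
          = rTensor W L (lTensor (↥K) B (rTensor W pK x)) := by
            rw [← LinearMap.comp_apply, lTensor_comp_rTensor, ← rTensor_comp_lTensor,
              LinearMap.comp_apply]
        _ = rTensor W L (rTensor W A₁ (rTensor W pC x)) := by rw [h2']
        _ = rTensor W pC x := by
            rw [← rTensor_comp_apply, hL, rTensor_id, LinearMap.id_apply]
        _ = Φ ⟨x, hx⟩ := rfl
    · rintro _ ⟨c₀, rfl⟩
      set x := rTensor W ιC (lTensor (↥C) B c₀) + rTensor W (ιK ∘ₗ A₁) c₀ with hxdef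
      have hx : x ∈ LinearMap.ker S := by
        rw [LinearMap.mem_ker, hS, LinearMap.add_apply, hxdef]
        have t1 : rTensor W A (rTensor W ιC (lTensor (↥C) B c₀))
            = rTensor W (ιK ∘ₗ A₁) (lTensor (↥C) B c₀) := by
          rw [← rTensor_comp_apply, ← hA₁, rTensor_comp_apply, ← rTensor_comp_apply]
        have t2 : rTensor W A (rTensor W (ιK ∘ₗ A₁) c₀) = 0 := by
          rw [← rTensor_comp_apply, hAiKA, rTensor_zero, LinearMap.zero_apply]
        have t3 : lTensor V B (rTensor W ιC (lTensor (↥C) B c₀)) = 0 := by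
          rw [← LinearMap.comp_apply, lTensor_comp_rTensor, ← rTensor_comp_lTensor,
            LinearMap.comp_apply, ← lTensor_comp_apply, hBB, lTensor_zero,
            LinearMap.zero_apply, map_zero]
        have t4 : lTensor V B (rTensor W (ιK ∘ₗ A₁) c₀)
            = rTensor W (ιK ∘ₗ A₁) (lTensor (↥C) B c₀) := by
          rw [← LinearMap.comp_apply, lTensor_comp_rTensor, ← rTensor_comp_lTensor,
            LinearMap.comp_apply]
        rw [map_add, map_add, t1, t2, t3, t4, add_zero, zero_add]
        exact stmt5_add_self h2 _
      refine ⟨⟨x, hx⟩, ?_⟩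
      show rTensor W pC x = lTensor (↥C) B c₀
      rw [hxdef, map_add]
      have u1 : rTensor W pC (rTensor W ιC (lTensor (↥C) B c₀)) = lTensor (↥C) B c₀ := by
        rw [← rTensor_comp_apply, hpCiC, rTensor_id, LinearMap.id_apply]
      have u2 : rTensor W pC (rTensor W (ιK ∘ₗ A₁) c₀) = 0 := by
        rw [← rTensor_comp_apply, hpCiKA, rTensor_zero, LinearMap.zero_apply]
      rw [u1, u2, add_zero]
  -- kernel of Φ
  have hJinj : Function.Injective (rTensor W ιK) :=
    Module.Flat.rTensor_preserves_injective_linearMap ιK K.injective_subtype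
  have hkerΦ : Submodule.map (LinearMap.ker S).subtype (LinearMap.ker Φ)
      = Submodule.map (rTensor W ιK) (LinearMap.ker (lTensor (↥K) B)) := by
    apply le_antisymm
    · rintro _ ⟨⟨x, hxS⟩, hxΦ, rfl⟩
      have hxΦ' : rTensor W pC x = 0 := hxΦ
      have hJy : rTensor W ιK (rTensor W pK x) = x := by
        have h := DFunLike.congr_fun (congrArg (rTensor W) hproj) x
        rw [rTensor_add, rTensor_id] at h
        simp only [LinearMap.add_apply, LinearMap.id_apply] at h
        rw [rTensor_comp, rTensor_comp] at h
        simp only [LinearMap.comp_apply] at h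
        rw [hxΦ', map_zero, add_zero] at h
        exact h
      have hSx : rTensor W A x + lTensor V B x = 0 := LinearMap.mem_ker.mp hxS
      have hAx : rTensor W A x = 0 := by
        rw [← hJy, ← rTensor_comp_apply, hAiK, rTensor_zero, LinearMap.zero_apply]
      have hBx : lTensor V B x = 0 := by
        rw [hAx, zero_add] at hSx
        exact hSx
      refine Submodule.mem_map.mpr ⟨rTensor W pK x, ?_, hJy⟩
      rw [LinearMap.mem_ker]
      apply hJinj
      rw [map_zero, ← LinearMap.comp_apply, rTensor_comp_lTensor, ← lTensor_comp_rTensor,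
        LinearMap.comp_apply, hJy]
      exact hBx
    · rintro _ ⟨y, hy, rfl⟩
      have hy' : lTensor (↥K) B y = 0 := LinearMap.mem_ker.mp hy
      have hxS : rTensor W ιK y ∈ LinearMap.ker S := by
        rw [LinearMap.mem_ker, hS, LinearMap.add_apply]
        have w1 : rTensor W A (rTensor W ιK y) = 0 := by
          rw [← rTensor_comp_apply, hAiK, rTensor_zero, LinearMap.zero_apply]
        have w2 : lTensor V B (rTensor W ιK y) = 0 := by
          rw [← LinearMap.comp_apply, lTensor_comp_rTensor, ← rTensor_comp_lTensor,
            LinearMap.comp_apply, hy', map_zero]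
        rw [w1, w2, add_zero]
      refine Submodule.mem_map.mpr ⟨⟨rTensor W ιK y, hxS⟩, ?_, rfl⟩
      rw [LinearMap.mem_ker]
      show rTensor W pC (rTensor W ιK y) = 0
      rw [← rTensor_comp_apply, hpCiK, rTensor_zero, LinearMap.zero_apply]
  -- dimension bookkeeping
  have hfin1 : finrank F (LinearMap.ker Φ)
      = finrank F (LinearMap.ker (lTensor (↥K) B)) := by
    calc finrank F (LinearMap.ker Φ)
        = finrank F (Submodule.map (LinearMap.ker S).subtype (LinearMap.ker Φ)) :=
          LinearEquiv.finrank_eq (Submodule.equivSubtypeMap _ _)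
      _ = finrank F (Submodule.map (rTensor W ιK) (LinearMap.ker (lTensor (↥K) B))) := by
          rw [hkerΦ]
      _ = finrank F (LinearMap.ker (lTensor (↥K) B)) :=
          (LinearEquiv.finrank_eq (Submodule.equivMapOfInjective _ hJinj _)).symm
  have hrm : r + finrank F K = m := by
    rw [← hr, ← hm, hK]
    exact LinearMap.finrank_range_add_finrank_ker A
  have hCd : finrank F C = r := by
    have h := Submodule.finrank_add_eq_of_isCompl hKC
    rw [hm] at h
    omega
  have hrangeC : finrank F (LinearMap.range (lTensor (↥C) B)) = r * s := by
    rw [stmt5_range_lTensor, hCd, hs]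
  have hrangeK : finrank F (LinearMap.range (lTensor (↥K) B)) = finrank F K * s := by
    rw [stmt5_range_lTensor, hs]
  have hKW : finrank F ((↥K) ⊗[F] W) = finrank F K * n := by
    rw [finrank_tensorProduct, hn]
  have hkerK : finrank F K * s + finrank F (LinearMap.ker (lTensor (↥K) B))
      = finrank F K * n := by
    rw [← hrangeK, ← hKW]
    exact LinearMap.finrank_range_add_finrank_ker (lTensor (↥K) B)
  have htotal : finrank F (LinearMap.range Φ) + finrank F (LinearMap.ker Φ)
      = finrank F (LinearMap.ker S) :=
    LinearMap.finrank_range_add_finrank_ker Φ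
  rw [hkerT, ← htotal, hrangeΦ, hrangeC, hfin1]
  -- final integer arithmetic
  set dK := finrank F K
  set kB := finrank F (LinearMap.ker (lTensor (↥K) B))
  have hdK : (dK : ℤ) = (m : ℤ) - r := by
    have := congrArg (Nat.cast : ℕ → ℤ) hrm
    push_cast at this
    linarith
  have hkB : (kB : ℤ) = (dK : ℤ) * n - (dK : ℤ) * s := by
    have := congrArg (Nat.cast : ℕ → ℤ) hkerK
    push_cast at this
    linarith
  push_cast
  rw [hkB, hdK]
  ring
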